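/- arXiv:0705.2976 — 4 statements merged into one kernel-verified Lean document; each statement's English description precedes it below -/
import Mathlib

section
/- For a nondecreasing q with q(r) strictly increasing eventually (q not truncated), the function Q(ξ,i) = Σ_{r≥i} q(r) e^{-ξ} ξ^{r-i}/(r-i)! is strictly increasing in ξ on its domain of convergence and strictly increasing in i, provided all values are finite. -/
open Real Nat

private lemma exp_tsum (t : ℝ) : Real.exp t = ∑' n : ℕ, t ^ n / n ! := by
  rw [Real.exp_eq_exp_ℝ, NormedSpace.exp_eq_tsum ℝ]
  exact tsum_congr fun n => by rw [smul_eq_mul, div_eq_inv_mul]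

private lemma poisson_tsum_one {t : ℝ} (ht : 0 ≤ t) :
    ∑' b : ℕ, ENNReal.ofReal (Real.exp (-t) * t ^ b / b !) = 1 := by
  have h1 : ∀ b : ℕ, ENNReal.ofReal (Real.exp (-t) * t ^ b / b !) =
      ENNReal.ofReal (Real.exp (-t)) * ENNReal.ofReal (t ^ b / b !) := fun b => by
    rw [mul_div_assoc, ENNReal.ofReal_mul (Real.exp_nonneg _)]
  rw [tsum_congr h1, ENNReal.tsum_mul_left,
    ← ENNReal.ofReal_tsum_of_nonneg (fun b => by positivity) (Real.summable_pow_div_factorial t),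
    ← exp_tsum, ← ENNReal.ofReal_mul (Real.exp_nonneg _), ← Real.exp_add, neg_add_cancel,
    Real.exp_zero, ENNReal.ofReal_one]

private lemma poisson_conv (x t : ℝ) (k : ℕ) :
    Real.exp (-(x + t)) * (x + t) ^ k / k ! =
      ∑ p ∈ Finset.HasAntidiagonal.antidiagonal k,
        (Real.exp (-x) * x ^ p.1 / p.1 !) * (Real.exp (-t) * t ^ p.2 / p.2 !) := by
  rw [Finset.Nat.sum_antidiagonal_eq_sum_range_succ_mk, add_pow, Finset.mul_sum,
    Finset.sum_div]
  refine Finset.sum_congr rfl fun m hm => ?_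
  have hmk : m ≤ k := Nat.lt_succ_iff.mp (Finset.mem_range.mp hm)
  have hc : ((k.choose m : ℝ)) * m ! * (k - m)! = k ! := by
    exact_mod_cast Nat.choose_mul_factorial_mul_factorial hmk
  have h1 : Real.exp (-(x + t)) = Real.exp (-x) * Real.exp (-t) := by
    rw [← Real.exp_add]; ring_nf
  have hm0 : (m ! : ℝ) ≠ 0 := Nat.cast_ne_zero.mpr (Nat.factorial_ne_zero m)
  have hk0 : (k ! : ℝ) ≠ 0 := Nat.cast_ne_zero.mpr (Nat.factorial_ne_zero k)
  have hkm0 : ((k - m)! : ℝ) ≠ 0 := Nat.cast_ne_zero.mpr (Nat.factorial_ne_zero _)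
  rw [h1]
  field_simp
  linear_combination (x ^ m * t ^ (k - m)) * hc

private lemma tsum_antidiag (F : ℕ × ℕ → ENNReal) :
    ∑' p : ℕ × ℕ, F p = ∑' k : ℕ, ∑ p ∈ Finset.HasAntidiagonal.antidiagonal k, F p := by
  rw [← Finset.HasAntidiagonal.sigmaAntidiagonalEquivProd.tsum_eq F, ENNReal.tsum_sigma']
  exact tsum_congr fun k => Finset.tsum_subtype _ _

private lemma ofReal_Q_aux (f : ℕ → NNReal) (ξ : ℝ) (hξ : 0 ≤ ξ)
    (hS : Summable fun k : ℕ => (f k : ℝ) * ξ ^ k / k !) :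
    ENNReal.ofReal (∑' k : ℕ, (f k : ℝ) * Real.exp (-ξ) * ξ ^ k / k !) =
      ∑' k : ℕ, ENNReal.ofReal ((f k : ℝ) * (Real.exp (-ξ) * ξ ^ k / k !)) := by
  have hS' : Summable fun k : ℕ => (f k : ℝ) * Real.exp (-ξ) * ξ ^ k / k ! :=
    (hS.mul_left (Real.exp (-ξ))).congr fun k => by ring
  rw [ENNReal.ofReal_tsum_of_nonneg (fun k => by positivity) hS']
  exact tsum_congr fun k => by rw [mul_div_assoc, mul_assoc, mul_div_assoc]

/-- If `q` is nondecreasing and not eventually constant, then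
`Q(ξ,i) = ∑_{r≥i} q(r) e^{-ξ} ξ^{r-i}/(r-i)!` is strictly increasing in `ξ` and strictly
increasing in `i`, provided the relevant series converge. -/
theorem stmt3 (q : ℕ → NNReal) (hq : Monotone q)
    (hnt : ∀ m : ℕ, ∃ r ≥ m, q r < q (r + 1))
    (Q : ℝ → ℕ → ℝ)
    (hQ : ∀ ξ i, Q ξ i = ∑' k : ℕ, (q (i + k) : ℝ) * Real.exp (-ξ) * ξ ^ k / k !) :
    (∀ i : ℕ, 1 ≤ i → ∀ x y : ℝ, 0 ≤ x → x < y →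
      (Summable fun k : ℕ => (q (i + k) : ℝ) * y ^ k / k !) → Q x i < Q y i) ∧
    (∀ i : ℕ, 1 ≤ i → ∀ x : ℝ, 0 < x →
      (Summable fun k : ℕ => (q (i + 1 + k) : ℝ) * x ^ k / k !) → Q x i < Q x (i + 1)) := by
  constructor
  · -- strictly increasing in ξ
    intro i _hi x y hx hxy hsum
    set t : ℝ := y - x with ht_def
    have ht : 0 < t := sub_pos.mpr hxy
    have hy : y = x + t := by ring
    have hy0 : 0 ≤ y := hx.trans hxy.le
    have hsx : Summable fun k : ℕ => (q (i + k) : ℝ) * x ^ k / k ! := by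
      refine hsum.of_nonneg_of_le (fun k => by positivity) fun k => ?_
      gcongr
    have hQx : ENNReal.ofReal (Q x i) =
        ∑' k : ℕ, ENNReal.ofReal ((q (i + k) : ℝ) * (Real.exp (-x) * x ^ k / k !)) := by
      rw [hQ]; exact ofReal_Q_aux (fun k => q (i + k)) x hx hsx
    have hQy : ENNReal.ofReal (Q y i) =
        ∑' k : ℕ, ENNReal.ofReal ((q (i + k) : ℝ) * (Real.exp (-y) * y ^ k / k !)) := by
      rw [hQ]; exact ofReal_Q_aux (fun k => q (i + k)) y hy0 hsum
    -- the small double sum equals ofReal (Q x i)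
    have hGx : (∑' p : ℕ × ℕ, ENNReal.ofReal ((q (i + p.1) : ℝ) *
          (Real.exp (-x) * x ^ p.1 / p.1 !) * (Real.exp (-t) * t ^ p.2 / p.2 !))) =
        ∑' k : ℕ, ENNReal.ofReal ((q (i + k) : ℝ) * (Real.exp (-x) * x ^ k / k !)) := by
      rw [ENNReal.tsum_prod (f := fun a b => ENNReal.ofReal ((q (i + a) : ℝ) *
        (Real.exp (-x) * x ^ a / a !) * (Real.exp (-t) * t ^ b / b !)))]
      refine tsum_congr fun a => ?_
      have h1 : ∀ b : ℕ, ENNReal.ofReal ((q (i + a) : ℝ) *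
            (Real.exp (-x) * x ^ a / a !) * (Real.exp (-t) * t ^ b / b !)) =
          ENNReal.ofReal ((q (i + a) : ℝ) * (Real.exp (-x) * x ^ a / a !)) *
            ENNReal.ofReal (Real.exp (-t) * t ^ b / b !) := fun b => by
        rw [ENNReal.ofReal_mul (by positivity)]
      rw [tsum_congr h1, ENNReal.tsum_mul_left, poisson_tsum_one ht.le, mul_one]
    -- the big double sum equals ofReal (Q y i)
    have hFy : (∑' p : ℕ × ℕ, ENNReal.ofReal ((q (i + p.1 + p.2) : ℝ) *
          (Real.exp (-x) * x ^ p.1 / p.1 !) * (Real.exp (-t) * t ^ p.2 / p.2 !))) =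
        ∑' k : ℕ, ENNReal.ofReal ((q (i + k) : ℝ) * (Real.exp (-y) * y ^ k / k !)) := by
      rw [tsum_antidiag]
      refine tsum_congr fun k => ?_
      rw [← ENNReal.ofReal_sum_of_nonneg (fun p _ => by positivity)]
      congr 1
      rw [hy, poisson_conv x t k, Finset.mul_sum]
      refine Finset.sum_congr rfl fun p hp => ?_
      have hpk : p.1 + p.2 = k := Finset.HasAntidiagonal.mem_antidiagonal.mp hp
      rw [← hpk, ← add_assoc]
      ring
    -- compare the double sums
    obtain ⟨r, hri, hrlt⟩ := hnt i
    have hlt : (∑' p : ℕ × ℕ, ENNReal.ofReal ((q (i + p.1) : ℝ) *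
          (Real.exp (-x) * x ^ p.1 / p.1 !) * (Real.exp (-t) * t ^ p.2 / p.2 !))) <
        ∑' p : ℕ × ℕ, ENNReal.ofReal ((q (i + p.1 + p.2) : ℝ) *
          (Real.exp (-x) * x ^ p.1 / p.1 !) * (Real.exp (-t) * t ^ p.2 / p.2 !)) := by
      refine ENNReal.tsum_lt_tsum (i := ((0 : ℕ), r + 1 - i)) ?_ (fun p => ?_) ?_
      · rw [hGx, ← hQx]; exact ENNReal.ofReal_ne_top
      · refine ENNReal.ofReal_le_ofReal ?_
        have : (q (i + p.1) : ℝ) ≤ (q (i + p.1 + p.2) : ℝ) := by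
          exact_mod_cast hq (Nat.le_add_right _ _)
        gcongr
      · have hidx : i + 0 + (r + 1 - i) = r + 1 := by omega
        have hqlt : (q (i + 0) : ℝ) < (q (i + 0 + (r + 1 - i)) : ℝ) := by
          rw [hidx]
          exact_mod_cast lt_of_le_of_lt (hq (by omega : i + 0 ≤ r)) hrlt
        have hc1 : 0 < Real.exp (-x) * x ^ (0 : ℕ) / (0 : ℕ)! := by
          simp [pow_zero]
          positivity
        have hc2 : 0 < Real.exp (-t) * t ^ (r + 1 - i) / (r + 1 - i)! := by positivity
        refine (ENNReal.ofReal_lt_ofReal_iff_of_nonneg (by positivity)).mpr ?_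
        exact mul_lt_mul_of_pos_right (mul_lt_mul_of_pos_right hqlt hc1) hc2
    have hfin : ENNReal.ofReal (Q x i) < ENNReal.ofReal (Q y i) := by
      rw [hQx, hQy, ← hGx, ← hFy]; exact hlt
    have h0 : 0 ≤ Q x i := by
      rw [hQ]; exact tsum_nonneg fun k => by positivity
    exact (ENNReal.ofReal_lt_ofReal_iff_of_nonneg h0).mp hfin
  · -- strictly increasing in i
    intro i _hi x hx hsum
    have hsx : Summable fun k : ℕ => (q (i + k) : ℝ) * x ^ k / k ! := by
      refine hsum.of_nonneg_of_le (fun k => by positivity) fun k => ?_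
      have : (q (i + k) : ℝ) ≤ (q (i + 1 + k) : ℝ) := by
        exact_mod_cast hq (by omega : i + k ≤ i + 1 + k)
      gcongr
    have hQi : ENNReal.ofReal (Q x i) =
        ∑' k : ℕ, ENNReal.ofReal ((q (i + k) : ℝ) * (Real.exp (-x) * x ^ k / k !)) := by
      rw [hQ]; exact ofReal_Q_aux (fun k => q (i + k)) x hx.le hsx
    have hQi1 : ENNReal.ofReal (Q x (i + 1)) =
        ∑' k : ℕ, ENNReal.ofReal ((q (i + 1 + k) : ℝ) * (Real.exp (-x) * x ^ k / k !)) := by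
      rw [hQ]; exact ofReal_Q_aux (fun k => q (i + 1 + k)) x hx.le hsum
    obtain ⟨r, hri, hrlt⟩ := hnt i
    have hlt : ENNReal.ofReal (Q x i) < ENNReal.ofReal (Q x (i + 1)) := by
      rw [hQi, hQi1]
      refine ENNReal.tsum_lt_tsum (i := r - i) ?_ (fun k => ?_) ?_
      · rw [← hQi]; exact ENNReal.ofReal_ne_top
      · refine ENNReal.ofReal_le_ofReal ?_
        have : (q (i + k) : ℝ) ≤ (q (i + 1 + k) : ℝ) := by
          exact_mod_cast hq (by omega : i + k ≤ i + 1 + k)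
        gcongr
      · have h1 : i + (r - i) = r := by omega
        have h2 : i + 1 + (r - i) = r + 1 := by omega
        have hqlt : (q (i + (r - i)) : ℝ) < (q (i + 1 + (r - i)) : ℝ) := by
          rw [h1, h2]; exact_mod_cast hrlt
        have hc : 0 < Real.exp (-x) * x ^ (r - i) / (r - i)! := by positivity
        refine (ENNReal.ofReal_lt_ofReal_iff_of_nonneg (by positivity)).mpr ?_
        exact mul_lt_mul_of_pos_right hqlt hc
    have h0 : 0 ≤ Q x i := by
      rw [hQ]; exact tsum_nonneg fun k => by positivity
    exact (ENNReal.ofReal_lt_ofReal_iff_of_nonneg h0).mp hlt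
end

section
/- Among nondecreasing threshold functions f: [0,1) → ℝ≥0 with F(t) = ∫_0^t f(s) ds satisfying F(0)=0 and F(1)=∞, the minimal value of the functional J(f) = (ℓ+1)^{-1} ∫_0^1 e^{-F(t)} f(t)^{ℓ+1} dt is (ℓ+1)^ℓ, attained by f(t) = (ℓ+1)/(1-t). -/
open Real MeasureTheory Set Filter Topology

lemma unionIoo : Ioo (0:ℝ) 1 = ⋃ n : ℕ, Ioo 0 (1 - 1/((n:ℝ)+1)) := by
  ext t
  simp only [mem_iUnion, mem_Ioo]
  constructor
  · rintro ⟨ht0, ht1⟩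
    obtain ⟨n, hn⟩ := exists_nat_one_div_lt (by linarith : (0:ℝ) < 1 - t)
    exact ⟨n, ht0, by push_cast at hn ⊢; linarith⟩
  · rintro ⟨n, ht0, ht1⟩
    have : (0:ℝ) < 1/(n+1) := by positivity
    exact ⟨ht0, by linarith⟩

lemma aux_meas {g : ℝ → ℝ} (hg : ∀ b : ℝ, 0 < b → b < 1 → AEMeasurable g (volume.restrict (Ioo 0 b))) :
    AEMeasurable g (volume.restrict (Ioo 0 1)) := by
  rw [unionIoo, aemeasurable_iUnion_iff]
  intro n
  rcases le_or_gt (1 - 1/((n:ℝ)+1)) 0 with h | h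
  · rw [Ioo_eq_empty (by linarith), Measure.restrict_empty]
    exact aemeasurable_zero_measure
  · have : (0:ℝ) < 1/((n:ℝ)+1) := by positivity
    exact hg _ h (by linarith)

section main
variable {ℓ : ℝ} {f : ℝ → ℝ}

set_option maxHeartbeats 1000000 in
lemma part1 (hℓ : 0 < ℓ)
    (hmono : MonotoneOn f (Ico 0 1)) (hpos : ∀ t ∈ Ico (0:ℝ) 1, 0 ≤ f t)
    (hint : ∀ t ∈ Ico (0:ℝ) 1, IntervalIntegrable f volume 0 t)
    (htop : Tendsto (fun t => ∫ s in (0:ℝ)..t, f s) (𝓝[<] (1:ℝ)) atTop) :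
    ENNReal.ofReal ((ℓ+1) ^ (ℓ+1)) ≤
      ∫⁻ t in Ioo (0:ℝ) 1, ENNReal.ofReal (Real.exp (-(∫ s in (0:ℝ)..t, f s)) * f t ^ (ℓ+1)) := by
  set a := ℓ + 1 with ha_def
  have ha : (0:ℝ) < a := by linarith
  have ha1 : (1:ℝ) < a := by linarith
  set F : ℝ → ℝ := fun t => ∫ s in (0:ℝ)..t, f s with hF_def
  -- clamp construction
  have clamp : ∀ b : ℝ, 0 < b → b < 1 → ∃ g : ℝ → ℝ, Monotone g ∧ (∀ t ∈ Icc (0:ℝ) b, g t = f t)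
      ∧ (∀ t, 0 ≤ g t) := by
    intro b hb0 hb1
    refine ⟨fun t => f (max 0 (min t b)), ?_, ?_, ?_⟩
    · intro x y hxy
      have hmx : max 0 (min x b) ∈ Ico (0:ℝ) 1 :=
        ⟨le_max_left _ _, by simp only [max_lt_iff, min_lt_iff]; exact ⟨by norm_num, Or.inr hb1⟩⟩
      have hmy : max 0 (min y b) ∈ Ico (0:ℝ) 1 :=
        ⟨le_max_left _ _, by simp only [max_lt_iff, min_lt_iff]; exact ⟨by norm_num, Or.inr hb1⟩⟩
      exact hmono hmx hmy (max_le_max le_rfl (min_le_min hxy le_rfl))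
    · intro t ht
      show f (max 0 (min t b)) = f t
      rw [min_eq_left ht.2, max_eq_right ht.1]
    · intro t
      exact hpos _ ⟨le_max_left _ _, by simp only [max_lt_iff, min_lt_iff]; exact ⟨by norm_num, Or.inr hb1⟩⟩
  -- a.e. measurability of f on Ioo 0 1
  have hfmeas : AEMeasurable f (volume.restrict (Ioo 0 1)) := by
    apply aux_meas
    intro b hb0 hb1
    obtain ⟨g, hgm, hgf, -⟩ := clamp b hb0 hb1
    refine hgm.measurable.aemeasurable.congr ?_
    filter_upwards [ae_restrict_mem measurableSet_Ioo] with t ht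
    exact hgf t ⟨ht.1.le, ht.2.le⟩
  -- continuity of F on Icc 0 b
  have hFcont : ∀ b : ℝ, 0 ≤ b → b < 1 → ContinuousOn F (Icc 0 b) := by
    intro b hb0 hb1
    have := intervalIntegral.continuousOn_primitive_interval
      (f := f) (μ := volume) (a := 0) (b := b) ?_
    · rwa [uIcc_of_le hb0] at this
    · rw [uIcc_of_le hb0]
      exact (intervalIntegrable_iff_integrableOn_Icc_of_le hb0).mp (hint b ⟨hb0, hb1⟩)
  have hFmeas : AEMeasurable F (volume.restrict (Ioo 0 1)) := by
    apply aux_meas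
    intro b hb0 hb1
    exact ((hFcont b hb0.le hb1).aemeasurable measurableSet_Icc).mono_measure
      (Measure.restrict_mono Ioo_subset_Icc_self le_rfl)
  set φ : ℝ → ENNReal := fun t => ENNReal.ofReal (Real.exp (-(F t)/a) * f t) with hφ_def
  have hφmeas : AEMeasurable φ (volume.restrict (Ioo 0 1)) :=
    ENNReal.measurable_ofReal.comp_aemeasurable
      ((Real.measurable_exp.comp_aemeasurable ((hFmeas.neg).div_const a)).mul hfmeas)
  have key : ∀ b : ℝ, 0 < b → b < 1 →
      ENNReal.ofReal (a - a * Real.exp (-(F b)/a)) ≤ ∫⁻ t in Ioo (0:ℝ) 1, φ t := by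
    intro b hb0 hb1
    obtain ⟨g, hgm, hgf, hg0⟩ := clamp b hb0 hb1
    set P : ℝ → ℝ := fun u => ∫ s in (0:ℝ)..u, g s with hP
    have hPF : ∀ u ∈ Icc (0:ℝ) b, P u = F u := by
      intro u hu
      apply intervalIntegral.integral_congr
      intro s hs
      rw [uIcc_of_le hu.1] at hs
      exact hgf s ⟨hs.1, le_trans hs.2 hu.2⟩
    set gp : ℝ → ℝ := Function.rightLim g with hgp
    have hgpm : Monotone gp := hgm.rightLim
    have hgp0 : ∀ u, 0 ≤ gp u := fun u => le_trans (hg0 u) (hgm.le_rightLim le_rfl)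
    set G : ℝ → ℝ := fun u => -a * Real.exp (-(P u)/a) with hG
    have hPcont : ContinuousOn P (Icc 0 b) := by
      have := intervalIntegral.continuousOn_primitive_interval
        (f := g) (μ := volume) (a := 0) (b := b) ?_
      · rwa [uIcc_of_le hb0.le] at this
      · rw [uIcc_of_le hb0.le]
        exact (intervalIntegrable_iff_integrableOn_Icc_of_le hb0.le).mp hgm.intervalIntegrable
    have hexpcont : ContinuousOn (fun u => Real.exp (-(P u)/a)) (Icc 0 b) :=
      Real.continuous_exp.comp_continuousOn ((hPcont.neg).div_const a)
    have hGcont : ContinuousOn G (Icc 0 b) := continuousOn_const.mul hexpcont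
    have hderiv : ∀ x ∈ Ioo (0:ℝ) b, HasDerivWithinAt G (Real.exp (-(P x)/a) * gp x) (Ioi x) x := by
      intro x hx
      have hPd : HasDerivWithinAt P (gp x) (Ici x) x :=
        intervalIntegral.integral_hasDerivWithinAt_of_tendsto_ae_right
          (hgm.intervalIntegrable)
          ⟨univ, univ_mem, hgm.measurable.aestronglyMeasurable⟩
          ((hgm.tendsto_rightLim x).mono_left inf_le_left)
      have houter : HasDerivAt (fun y => -a * Real.exp (-y/a)) (Real.exp (-(P x)/a)) (P x) := by
        have h1 : HasDerivAt (fun y : ℝ => -y/a) (-1/a) (P x) := by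
          simpa using ((hasDerivAt_id (P x)).neg.div_const a)
        have h2 := (Real.hasDerivAt_exp _).comp (P x) h1
        have h3 := h2.const_mul (-a)
        convert h3 using 1
        all_goals first | rfl | field_simp
      exact (houter.comp_hasDerivWithinAt x hPd).mono Ioi_subset_Ici_self
    have hφint : IntegrableOn (fun u => Real.exp (-(P u)/a) * gp u) (Icc 0 b) := by
      have h2 : ContinuousOn (fun u => Real.exp (-(P u)/a)) (uIcc 0 b) := by
        rwa [uIcc_of_le hb0.le]
      exact (intervalIntegrable_iff_integrableOn_Icc_of_le hb0.le).mp
        (hgpm.intervalIntegrable.continuousOn_mul h2)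
    have hsub := intervalIntegral.sub_le_integral_of_hasDeriv_right_of_le hb0.le hGcont hderiv
      hφint (fun x _ => le_rfl)
    have hG0 : G 0 = -a := by
      simp [hG, hP, intervalIntegral.integral_same]
    have hGb : G b = -a * Real.exp (-(F b)/a) := by
      simp only [hG]
      rw [hPF b ⟨le_rfl.trans hb0.le, le_rfl⟩]
    have h5 : a - a * Real.exp (-(F b)/a) ≤ ∫ y in (0:ℝ)..b, Real.exp (-(P y)/a) * gp y := by
      rw [hG0, hGb] at hsub
      linarith
    have h6 : ENNReal.ofReal (∫ y in (0:ℝ)..b, Real.exp (-(P y)/a) * gp y)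
        = ∫⁻ y in Ioc 0 b, ENNReal.ofReal (Real.exp (-(P y)/a) * gp y) := by
      rw [intervalIntegral.integral_of_le hb0.le]
      exact ofReal_integral_eq_lintegral_ofReal (hφint.mono_set Ioc_subset_Icc_self)
        (ae_of_all _ fun u => mul_nonneg (Real.exp_nonneg _) (hgp0 u))
    have h7 : ∫⁻ y in Ioc 0 b, ENNReal.ofReal (Real.exp (-(P y)/a) * gp y)
        = ∫⁻ y in Ioc 0 b, φ y := by
      apply lintegral_congr_ae
      have hcount : (({x | ¬ContinuousAt g x} : Set ℝ) ∪ {b}).Countable :=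
        (hgm.countable_not_continuousAt).union (countable_singleton b)
      have hnull : volume (({x | ¬ContinuousAt g x} : Set ℝ) ∪ {b}) = 0 :=
        hcount.measure_zero _
      rw [Filter.EventuallyEq, ae_restrict_iff' measurableSet_Ioc]
      filter_upwards [measure_eq_zero_iff_ae_notMem.mp hnull] with y hy hyIoc
      have hcont : ContinuousAt g y := not_not.mp (fun h => hy (Or.inl h))
      have hgpy : gp y = g y :=
        rightLim_eq_of_tendsto
          (hcont.tendsto.mono_left nhdsWithin_le_nhds)
      simp only [hφ_def]
      rw [hgpy, hgf y ⟨hyIoc.1.le, hyIoc.2⟩, hPF y ⟨hyIoc.1.le, hyIoc.2⟩]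
    calc ENNReal.ofReal (a - a * Real.exp (-(F b)/a))
        ≤ ENNReal.ofReal (∫ y in (0:ℝ)..b, Real.exp (-(P y)/a) * gp y) :=
          ENNReal.ofReal_le_ofReal h5
      _ = ∫⁻ y in Ioc 0 b, φ y := by rw [h6, h7]
      _ ≤ ∫⁻ t in Ioo (0:ℝ) 1, φ t :=
          lintegral_mono_set (fun x hx => ⟨hx.1, lt_of_le_of_lt hx.2 hb1⟩)
  have hkey : ENNReal.ofReal a ≤ ∫⁻ t in Ioo (0:ℝ) 1, φ t := by
    have h1 : Tendsto (fun b => -(F b)/a) (𝓝[<] (1:ℝ)) atBot := by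
      have := tendsto_neg_atTop_atBot.comp (htop.atTop_div_const ha)
      simpa [neg_div, Function.comp_def] using this
    have h2 : Tendsto (fun b => Real.exp (-(F b)/a)) (𝓝[<] (1:ℝ)) (𝓝 0) :=
      Real.tendsto_exp_atBot.comp h1
    have h3 : Tendsto (fun b => a - a * Real.exp (-(F b)/a)) (𝓝[<] (1:ℝ)) (𝓝 (a - a * 0)) :=
      tendsto_const_nhds.sub (tendsto_const_nhds.mul h2)
    rw [mul_zero, sub_zero] at h3
    have htend : Tendsto (fun b => ENNReal.ofReal (a - a * Real.exp (-(F b)/a))) (𝓝[<] (1:ℝ))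
        (𝓝 (ENNReal.ofReal a)) :=
      (ENNReal.continuous_ofReal.continuousAt).tendsto.comp h3
    refine le_of_tendsto htend ?_
    filter_upwards [Ioo_mem_nhdsLT (zero_lt_one : (0:ℝ) < 1)] with b hb
    exact key b hb.1 hb.2
  have hconj : Real.HolderConjugate a (a/ℓ) := by
    rw [Real.holderConjugate_iff]
    constructor
    · exact ha1
    · rw [inv_div]
      field_simp
      ring
  have hH := ENNReal.lintegral_mul_le_Lp_mul_Lq (volume.restrict (Ioo (0:ℝ) 1)) hconj hφmeas
      (aemeasurable_const (b := (1:ENNReal)))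
  simp only [Pi.mul_apply, mul_one, ENNReal.one_rpow, lintegral_one, Measure.restrict_apply_univ,
    Real.volume_Ioo, sub_zero, ENNReal.ofReal_one] at hH
  set K := ∫⁻ t in Ioo (0:ℝ) 1, ENNReal.ofReal (Real.exp (-(F t)) * f t ^ a) with hK
  have hpow : ∫⁻ t in Ioo (0:ℝ) 1, (φ t) ^ a = K := by
    rw [hK]
    apply setLIntegral_congr_fun measurableSet_Ioo
    intro t ht
    have hft : 0 ≤ f t := hpos t ⟨ht.1.le, ht.2⟩
    simp only [hφ_def]
    rw [ENNReal.ofReal_rpow_of_nonneg (mul_nonneg (Real.exp_nonneg _) hft) ha.le,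
      Real.mul_rpow (Real.exp_nonneg _) hft, ← Real.exp_mul, div_mul_cancel₀ _ ha.ne']
  have h8 : ENNReal.ofReal a ≤ K ^ (1/a) := by
    rw [← hpow]
    exact hkey.trans (by simpa using hH)
  have h9 : ENNReal.ofReal (a ^ a) ≤ K := by
    have := ENNReal.rpow_le_rpow h8 ha.le
    rwa [ENNReal.ofReal_rpow_of_pos ha, ← ENNReal.rpow_mul, one_div_mul_cancel ha.ne',
      ENNReal.rpow_one] at this
  exact h9
end main

lemma logint {ℓ t : ℝ} (hℓ : 0 < ℓ) (ht : t ∈ Ioo (0:ℝ) 1) :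
    (∫ s in (0:ℝ)..t, (ℓ + 1) / (1 - s)) = -((ℓ+1) * Real.log (1 - t)) := by
  have h1t : (0:ℝ) < 1 - t := by linarith [ht.2]
  have key : ∀ s ∈ uIcc (0:ℝ) t, HasDerivAt (fun u => -((ℓ+1) * Real.log (1 - u)))
      ((ℓ + 1) / (1 - s)) s := by
    intro s hs
    rw [uIcc_of_le ht.1.le] at hs
    have hs1 : (0:ℝ) < 1 - s := by linarith [hs.2, ht.2]
    have h1 : HasDerivAt (fun u : ℝ => 1 - u) (-1) s := by
      simpa using (hasDerivAt_id s).const_sub 1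
    have h2 : HasDerivAt (fun u : ℝ => Real.log (1 - u)) ((1-s)⁻¹ * (-1)) s :=
      (Real.hasDerivAt_log hs1.ne').comp s h1
    have h3 := (h2.const_mul (ℓ+1)).neg
    convert h3 using 1
    all_goals first | rfl | field_simp
  have hcont : IntervalIntegrable (fun s => (ℓ + 1) / (1 - s)) volume 0 t := by
    apply ContinuousOn.intervalIntegrable
    apply ContinuousOn.div continuousOn_const (by fun_prop)
    intro s hs
    rw [uIcc_of_le ht.1.le] at hs
    have : (0:ℝ) < 1 - s := by linarith [hs.2, ht.2]
    exact this.ne'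
  have := intervalIntegral.integral_eq_sub_of_hasDerivAt key hcont
  rw [this]
  simp

lemma ofReal_inv_mul (a : ℝ) (ha : 0 < a) :
    (ENNReal.ofReal a)⁻¹ * ENNReal.ofReal (a ^ (a)) = ENNReal.ofReal (a ^ (a - 1)) := by
  have h1 : a ^ a = a ^ (a-1) * a := by
    rw [show a ^ a = a ^ ((a-1)+1) by norm_num, Real.rpow_add ha, Real.rpow_one]
  rw [h1, ENNReal.ofReal_mul (Real.rpow_nonneg ha.le _), mul_comm (ENNReal.ofReal _),
    ← mul_assoc, ENNReal.inv_mul_cancel (by simpa using ha) ENNReal.ofReal_ne_top, one_mul]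

lemma part2 (ℓ : ℝ) (hℓ : 0 < ℓ) :
    (∫⁻ t in Ioo (0:ℝ) 1, ENNReal.ofReal (Real.exp (-(∫ s in (0:ℝ)..t, (ℓ+1)/(1-s))) *
      ((ℓ+1)/(1-t)) ^ (ℓ+1))) = ENNReal.ofReal ((ℓ+1) ^ (ℓ+1)) := by
  have ha : (0:ℝ) < ℓ + 1 := by linarith
  have h : ∀ t ∈ Ioo (0:ℝ) 1, ENNReal.ofReal (Real.exp (-(∫ s in (0:ℝ)..t, (ℓ+1)/(1-s))) *
      ((ℓ+1)/(1-t)) ^ (ℓ+1)) = ENNReal.ofReal ((ℓ+1) ^ (ℓ+1)) := by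
    intro t ht
    have h1t : (0:ℝ) < 1 - t := by linarith [ht.2]
    rw [logint hℓ ht, neg_neg, mul_comm (ℓ+1) (Real.log (1-t)), Real.exp_mul, Real.exp_log h1t,
      Real.div_rpow ha.le h1t.le]
    congr 1
    rw [mul_div_assoc', mul_comm, mul_div_assoc, div_self (Real.rpow_pos_of_pos h1t _).ne', mul_one]
  rw [setLIntegral_congr_fun measurableSet_Ioo h, setLIntegral_const,
    Real.volume_Ioo]
  norm_num



/-- Among nondecreasing nonnegative thresholds `f` on `[0,1)` with `F(t)=∫_0^t f` satisfying
`F(1⁻)=∞`, the minimal value of `J(f) = (ℓ+1)⁻¹ ∫_0^1 e^{-F(t)} f(t)^{ℓ+1} dt` is `(ℓ+1)^ℓ`,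
attained by `f(t) = (ℓ+1)/(1-t)`. -/
theorem stmt4 (ℓ : ℝ) (hℓ : 0 < ℓ)
    (J : (ℝ → ℝ) → ENNReal)
    (hJ : ∀ f : ℝ → ℝ, J f = (ENNReal.ofReal (ℓ + 1))⁻¹ *
        ∫⁻ t in Ioo (0 : ℝ) 1,
          ENNReal.ofReal (Real.exp (-(∫ s in (0:ℝ)..t, f s)) * (f t) ^ (ℓ + 1))) :
    (∀ f : ℝ → ℝ, MonotoneOn f (Ico 0 1) → (∀ t ∈ Ico (0:ℝ) 1, 0 ≤ f t) →
        (∀ t ∈ Ico (0:ℝ) 1, IntervalIntegrable f volume 0 t) →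
        Tendsto (fun t => ∫ s in (0:ℝ)..t, f s) (nhdsWithin 1 (Iio 1)) atTop →
        ENNReal.ofReal ((ℓ + 1) ^ ℓ) ≤ J f) ∧
    J (fun t => (ℓ + 1) / (1 - t)) = ENNReal.ofReal ((ℓ + 1) ^ ℓ) := by
  have ha : (0:ℝ) < ℓ + 1 := by linarith
  have hmul : (ENNReal.ofReal (ℓ+1))⁻¹ * ENNReal.ofReal ((ℓ+1) ^ (ℓ+1))
      = ENNReal.ofReal ((ℓ+1) ^ ℓ) := by
    have := ofReal_inv_mul (ℓ+1) ha
    rwa [show (ℓ+1) - 1 = ℓ by ring] at this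
  constructor
  · intro f hmono hpos hint htop
    rw [hJ f]
    calc ENNReal.ofReal ((ℓ+1) ^ ℓ)
        = (ENNReal.ofReal (ℓ+1))⁻¹ * ENNReal.ofReal ((ℓ+1) ^ (ℓ+1)) := hmul.symm
      _ ≤ _ := mul_le_mul_right (part1 hℓ hmono hpos hint htop) _
  · simp only [hJ]
    rw [part2 ℓ hℓ, hmul]
end

section
/- If q: ℕ → ℝ≥0 satisfies q(r) ≤ c·exp(r^β) for constants c > 0 and 0 < β < 1, then Q(x,1) = Σ_{r≥1} q(r) e^{-x} x^{r-1}/(r-1)! is finite for all x ≥ 0 and Q(x,1) = O(exp(x^β')) as x → ∞ for every β' ∈ (β,1). -/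
open Real Nat Filter

lemma pow_le_exp_mul_factorial (j : ℕ) : (j:ℝ)^j ≤ Real.exp j * j ! := by
  have h := Real.sum_le_exp_of_nonneg (x := (j:ℝ)) (by positivity) (j+1)
  have hterm : (j:ℝ)^j / j ! ≤ Real.exp j := by
    refine le_trans ?_ h
    have := Finset.single_le_sum (f := fun i => (j:ℝ)^i / i !)
      (fun i _ => by positivity) (Finset.self_mem_range_succ j)
    simpa using this
  rw [div_le_iff₀ (by positivity)] at hterm
  linarith

lemma tail_term_le (x : ℝ) (hx : 0 ≤ x) (j : ℕ) (hj : Real.exp 3 * x ≤ j) :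
    (Real.exp 1 * x) ^ j / (j ! : ℝ) ≤ Real.exp (-1) ^ j := by
  have hfac : (0:ℝ) < j ! := by positivity
  rw [div_le_iff₀ hfac]
  have h1 : Real.exp 2 * x ≤ Real.exp (-1) * j := by
    have h2 : Real.exp (-1) * (Real.exp 3 * x) ≤ Real.exp (-1) * j :=
      mul_le_mul_of_nonneg_left hj (Real.exp_pos _).le
    calc Real.exp 2 * x = Real.exp (-1) * (Real.exp 3 * x) := by
          rw [← mul_assoc, ← Real.exp_add]; norm_num
      _ ≤ _ := h2
  have h2 : (Real.exp 2 * x) ^ j ≤ (Real.exp (-1) * j) ^ j :=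
    pow_le_pow_left₀ (by positivity) h1 j
  have h3 : (Real.exp (-1) * (j:ℝ)) ^ j ≤ j ! := by
    rw [mul_pow]
    calc Real.exp (-1) ^ j * (j:ℝ)^j
        ≤ Real.exp (-1) ^ j * (Real.exp j * j !) :=
          mul_le_mul_of_nonneg_left (pow_le_exp_mul_factorial j) (by positivity)
      _ = (Real.exp (-1) * Real.exp 1) ^ j * j ! := by
          rw [mul_pow, Real.exp_one_pow]; ring
      _ = j ! := by rw [← Real.exp_add]; norm_num
  calc (Real.exp 1 * x) ^ j = Real.exp (-1) ^ j * (Real.exp 2 * x) ^ j := by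
        rw [← mul_pow, ← mul_assoc, ← Real.exp_add]; norm_num
    _ ≤ Real.exp (-1) ^ j * (Real.exp (-1) * j) ^ j :=
        mul_le_mul_of_nonneg_left h2 (by positivity)
    _ ≤ Real.exp (-1) ^ j * j ! := mul_le_mul_of_nonneg_left h3 (by positivity)

/-- If `q(r) ≤ c exp(r^β)` with `c > 0`, `0 < β < 1`, then
`Q(x,1) = ∑_{r≥1} q(r) e^{-x} x^{r-1}/(r-1)!` is finite for all `x ≥ 0`, and
`Q(x,1) = O(exp(x^{β'}))` as `x → ∞` for every `β' ∈ (β,1)`. -/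
theorem stmt10 (q : ℕ → NNReal) (hq : Monotone q) (c : ℝ) (hc : 0 < c)
    (β : ℝ) (hβ : β ∈ Set.Ioo (0:ℝ) 1)
    (hgrowth : ∀ r : ℕ, (q r : ℝ) ≤ c * Real.exp ((r : ℝ) ^ β)) :
    (∀ x : ℝ, 0 ≤ x →
        Summable fun k : ℕ => (q (1 + k) : ℝ) * Real.exp (-x) * x ^ k / k !) ∧
    (∀ β' ∈ Set.Ioo β 1, ∃ C > (0:ℝ), ∃ x₀ : ℝ, ∀ x ≥ x₀,
        (∑' k : ℕ, (q (1 + k) : ℝ) * Real.exp (-x) * x ^ k / k !)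
          ≤ C * Real.exp (x ^ β')) := by
  obtain ⟨hβ0, hβ1⟩ := hβ
  have hqbound : ∀ k : ℕ, (q (1 + k) : ℝ) ≤ c * Real.exp 1 * Real.exp 1 ^ k := by
    intro k
    have h1 : ((1 + k : ℕ) : ℝ) ^ β ≤ ((1 + k : ℕ) : ℝ) := by
      have hge : (1:ℝ) ≤ ((1 + k : ℕ) : ℝ) := by
        push_cast; linarith [Nat.cast_nonneg (α := ℝ) k]
      calc ((1 + k : ℕ) : ℝ) ^ β ≤ ((1 + k : ℕ) : ℝ) ^ (1:ℝ) :=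
            Real.rpow_le_rpow_of_exponent_le hge hβ1.le
        _ = _ := Real.rpow_one _
    calc (q (1 + k) : ℝ) ≤ c * Real.exp (((1 + k : ℕ) : ℝ) ^ β) := hgrowth _
      _ ≤ c * Real.exp ((1 + k : ℕ)) :=
          mul_le_mul_of_nonneg_left (Real.exp_le_exp.mpr h1) hc.le
      _ = c * Real.exp 1 * Real.exp 1 ^ k := by
          push_cast
          rw [Real.exp_add, Real.exp_one_pow]; ring
  have hsum : ∀ x : ℝ, 0 ≤ x →
      Summable fun k : ℕ => (q (1 + k) : ℝ) * Real.exp (-x) * x ^ k / k ! := by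
    intro x hx
    refine Summable.of_nonneg_of_le (fun k => by positivity) (fun k => ?_)
      ((Real.summable_pow_div_factorial (Real.exp 1 * x)).mul_left (c * Real.exp 1))
    have hexpx : Real.exp (-x) ≤ 1 := Real.exp_le_one_iff.mpr (by linarith)
    have hb : (q (1 + k) : ℝ) * Real.exp (-x) ≤ c * Real.exp 1 * Real.exp 1 ^ k := by
      calc (q (1 + k) : ℝ) * Real.exp (-x) ≤ (q (1 + k) : ℝ) * 1 :=
            mul_le_mul_of_nonneg_left hexpx (by positivity)
        _ = (q (1 + k) : ℝ) := mul_one _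
        _ ≤ _ := hqbound k
    calc (q (1 + k) : ℝ) * Real.exp (-x) * x ^ k / k !
        ≤ c * Real.exp 1 * Real.exp 1 ^ k * x ^ k / k ! :=
          div_le_div_of_nonneg_right
            (mul_le_mul_of_nonneg_right hb (by positivity)) (by positivity)
      _ = c * Real.exp 1 * ((Real.exp 1 * x) ^ k / k !) := by
          rw [mul_pow]; ring
  refine ⟨hsum, ?_⟩
  rintro β' ⟨hβ'l, hβ'1⟩
  set M : ℝ := Real.exp 3 with hM
  have hM2 : (2:ℝ) ≤ M := by
    have := Real.add_one_le_exp (3:ℝ); simp only [hM]; linarith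
  refine ⟨c * Real.exp 1 + 2 * c * Real.exp 1, by positivity,
    max 2 ((M + 1) ^ (β / (β' - β))), fun x hx => ?_⟩
  have hx2 : (2:ℝ) ≤ x := le_trans (le_max_left _ _) hx
  have hx0 : (0:ℝ) < x := by linarith
  have hxM : (M + 1) ^ (β / (β' - β)) ≤ x := le_trans (le_max_right _ _) hx
  have hββ' : 0 < β' - β := by linarith
  have hM0 : (0:ℝ) ≤ M + 1 := by linarith
  have hkey : (M + 1) ^ β ≤ x ^ (β' - β) := by
    calc (M + 1) ^ β = ((M + 1) ^ (β / (β' - β))) ^ (β' - β) := by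
          rw [← Real.rpow_mul hM0, div_mul_cancel₀ _ hββ'.ne']
      _ ≤ x ^ (β' - β) := Real.rpow_le_rpow (by positivity) hxM hββ'.le
  set f : ℕ → ℝ := fun k => (q (1 + k) : ℝ) * Real.exp (-x) * x ^ k / k ! with hf
  set N : ℕ := ⌈M * x⌉₊ + 1 with hN
  have hS : Summable f := hsum x hx0.le
  have hsplit : ∑ i ∈ Finset.range N, f i + ∑' i, f (i + N) = ∑' i, f i :=
    hS.sum_add_tsum_nat_add N
  have hexpx1 : Real.exp (-x) ≤ 1 := Real.exp_le_one_iff.mpr (by linarith)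
  -- head bound
  have hhead : ∑ i ∈ Finset.range N, f i ≤ c * Real.exp (x ^ β') := by
    have hbd : ∀ i ∈ Finset.range N, f i ≤ c * Real.exp (x ^ β') * (Real.exp (-x) * (x ^ i / i !)) := by
      intro i hi
      have hiN : (i:ℝ) ≤ M * x + 1 := by
        have h1 : i ≤ ⌈M * x⌉₊ := Nat.lt_succ_iff.mp (Finset.mem_range.mp hi)
        have h2 : (⌈M * x⌉₊ : ℝ) < M * x + 1 := Nat.ceil_lt_add_one (by positivity)
        calc (i:ℝ) ≤ (⌈M * x⌉₊ : ℝ) := Nat.cast_le.mpr h1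
          _ ≤ M * x + 1 := h2.le
      have h1i : ((1 + i : ℕ) : ℝ) ≤ (M + 1) * x := by push_cast; nlinarith
      have hq' : (q (1 + i) : ℝ) ≤ c * Real.exp (x ^ β') := by
        calc (q (1 + i) : ℝ) ≤ c * Real.exp (((1 + i : ℕ) : ℝ) ^ β) := hgrowth _
          _ ≤ c * Real.exp (x ^ β') := by
            apply mul_le_mul_of_nonneg_left _ hc.le
            apply Real.exp_le_exp.mpr
            calc ((1 + i : ℕ) : ℝ) ^ β ≤ ((M + 1) * x) ^ β :=
                  Real.rpow_le_rpow (by positivity) h1i hβ0.le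
              _ = (M + 1) ^ β * x ^ β := Real.mul_rpow hM0 hx0.le
              _ ≤ x ^ (β' - β) * x ^ β :=
                  mul_le_mul_of_nonneg_right hkey (by positivity)
              _ = x ^ β' := by rw [← Real.rpow_add hx0]; ring_nf
      calc f i = (q (1 + i) : ℝ) * (Real.exp (-x) * (x ^ i / i !)) := by
            simp only [hf]; ring
        _ ≤ c * Real.exp (x ^ β') * (Real.exp (-x) * (x ^ i / i !)) :=
            mul_le_mul_of_nonneg_right hq' (by positivity)
    calc ∑ i ∈ Finset.range N, f i
        ≤ ∑ i ∈ Finset.range N, c * Real.exp (x ^ β') * (Real.exp (-x) * (x ^ i / i !)) :=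
          Finset.sum_le_sum hbd
      _ = c * Real.exp (x ^ β') * Real.exp (-x) * ∑ i ∈ Finset.range N, x ^ i / i ! := by
          rw [Finset.mul_sum]; congr 1; ext i; ring
      _ ≤ c * Real.exp (x ^ β') * Real.exp (-x) * Real.exp x := by
          apply mul_le_mul_of_nonneg_left (Real.sum_le_exp_of_nonneg hx0.le N) (by positivity)
      _ = c * Real.exp (x ^ β') := by
          rw [mul_assoc, ← Real.exp_add]; simp
  -- tail bound
  have htail : ∑' i, f (i + N) ≤ 2 * c * Real.exp 1 := by
    have hterm : ∀ i : ℕ, f (i + N) ≤ c * Real.exp 1 * Real.exp (-1) ^ i := by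
      intro i
      have hjN : Real.exp 3 * x ≤ ((i + N : ℕ) : ℝ) := by
        rw [← hM]
        have h1 : M * x ≤ (⌈M * x⌉₊ : ℝ) := Nat.le_ceil _
        have : (N:ℝ) ≤ ((i + N : ℕ):ℝ) := by push_cast; linarith [Nat.cast_nonneg (α := ℝ) i]
        have hNc : (⌈M * x⌉₊:ℝ) ≤ (N:ℝ) := by push_cast [hN]; linarith
        simp only [hM] at h1 ⊢
        linarith
      have ht := tail_term_le x hx0.le (i + N) hjN
      have hbq := hqbound (i + N)
      have hstep : f (i + N) ≤ c * Real.exp 1 * Real.exp (-1) ^ (i + N) := by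
        calc f (i + N) = (q (1 + (i + N)) : ℝ) * Real.exp (-x) * x ^ (i + N) / (i + N)! := rfl
          _ ≤ c * Real.exp 1 * Real.exp 1 ^ (i + N) * x ^ (i + N) / (i + N)! := by
              have hnum : (q (1 + (i + N)) : ℝ) * Real.exp (-x)
                  ≤ c * Real.exp 1 * Real.exp 1 ^ (i + N) := by
                calc (q (1 + (i + N)) : ℝ) * Real.exp (-x)
                    ≤ (q (1 + (i + N)) : ℝ) * 1 :=
                      mul_le_mul_of_nonneg_left hexpx1 (by positivity)
                  _ = _ := mul_one _
                  _ ≤ _ := hbq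
              exact div_le_div_of_nonneg_right
                (mul_le_mul_of_nonneg_right hnum (by positivity)) (by positivity)
          _ = c * Real.exp 1 * ((Real.exp 1 * x) ^ (i + N) / (i + N)!) := by
              rw [mul_pow]; ring
          _ ≤ c * Real.exp 1 * Real.exp (-1) ^ (i + N) :=
              mul_le_mul_of_nonneg_left ht (by positivity)
      have hpow : Real.exp (-1) ^ (i + N) ≤ Real.exp (-1) ^ i := by
        rw [pow_add]
        have h1 : Real.exp (-1) ^ N ≤ 1 :=
          pow_le_one₀ (Real.exp_pos _).le (Real.exp_le_one_iff.mpr (by norm_num))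
        calc Real.exp (-1) ^ i * Real.exp (-1) ^ N ≤ Real.exp (-1) ^ i * 1 :=
              mul_le_mul_of_nonneg_left h1 (by positivity)
          _ = _ := mul_one _
      exact hstep.trans (mul_le_mul_of_nonneg_left hpow (by positivity))
    have hgeo : Summable fun i : ℕ => c * Real.exp 1 * Real.exp (-1) ^ i :=
      (summable_geometric_of_lt_one (Real.exp_pos _).le
        (Real.exp_lt_one_iff.mpr (by norm_num))).mul_left _
    calc ∑' i, f (i + N) ≤ ∑' i : ℕ, c * Real.exp 1 * Real.exp (-1) ^ i :=
          Summable.tsum_le_tsum hterm ((summable_nat_add_iff N).mpr hS) hgeo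
      _ = c * Real.exp 1 * (1 - Real.exp (-1))⁻¹ := by
          rw [tsum_mul_left, tsum_geometric_of_lt_one (Real.exp_pos _).le
            (Real.exp_lt_one_iff.mpr (by norm_num))]
      _ ≤ 2 * c * Real.exp 1 := by
          have he2 : (2:ℝ) ≤ Real.exp 1 := by linarith [Real.add_one_le_exp (1:ℝ)]
          have he : Real.exp (-1) ≤ 1/2 := by
            rw [Real.exp_neg]
            rw [inv_le_comm₀ (Real.exp_pos _) (by norm_num)]
            linarith
          have hinv : (1 - Real.exp (-1))⁻¹ ≤ 2 := by
            rw [inv_le_comm₀ (by linarith) (by norm_num)]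
            linarith
          nlinarith [mul_pos hc (Real.exp_pos 1)]
  have hE1 : (1:ℝ) ≤ Real.exp (x ^ β') :=
    Real.one_le_exp (Real.rpow_nonneg hx0.le β')
  have he1 : (1:ℝ) ≤ Real.exp 1 := by linarith [Real.add_one_le_exp (1:ℝ)]
  calc (∑' k : ℕ, (q (1 + k) : ℝ) * Real.exp (-x) * x ^ k / k !)
      = ∑ i ∈ Finset.range N, f i + ∑' i, f (i + N) := hsplit.symm
    _ ≤ c * Real.exp (x ^ β') + 2 * c * Real.exp 1 := add_le_add hhead htail
    _ ≤ (c * Real.exp 1 + 2 * c * Real.exp 1) * Real.exp (x ^ β') := by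
        nlinarith [mul_nonneg (mul_nonneg hc.le (Real.exp_pos (x ^ β')).le)
            (sub_nonneg.mpr he1),
          mul_nonneg (mul_nonneg hc.le (Real.exp_pos 1).le) (sub_nonneg.mpr hE1)]
end

section
/- Let f(t) = (1-t)^{-α} for t ∈ [0,1) with α > 1. Then exp(-∫_0^t f(s) ds) = exp(-((1-t)^{1-α} - 1)/(α-1)), and ∫_0^1 exp(-∫_0^t f(s) ds) · (∫_0^{f(t)} exp(x^β) dx) dt < ∞ whenever α > 1/(1-β) and 0 < β < 1. -/
open Real Set MeasureTheory Filter


lemma integral_aux (α : ℝ) (hα : 1 < α) {t : ℝ} (ht0 : 0 ≤ t) (ht1 : t < 1) :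
    (∫ s in (0:ℝ)..t, (1 - s) ^ (-α)) = ((1 - t) ^ (1 - α) - 1) / (α - 1) := by
  have key : ∀ s ∈ Set.uIcc (0:ℝ) t,
      HasDerivAt (fun s => (1 - s) ^ (1 - α) / (α - 1)) ((1 - s) ^ (-α)) s := by
    intro s hs
    rw [uIcc_of_le ht0] at hs
    have hs1 : (0:ℝ) < 1 - s := by linarith [hs.2]
    have h1 : HasDerivAt (fun s : ℝ => 1 - s) (-1) s := by
      simpa using (hasDerivAt_id s).const_sub 1
    have h2 : HasDerivAt (fun s : ℝ => (1 - s) ^ (1 - α))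
        (((1 - α) * (1 - s) ^ (1 - α - 1)) * (-1)) s :=
      (Real.hasDerivAt_rpow_const (Or.inl hs1.ne')).comp s h1
    have h3 := h2.div_const (α - 1)
    refine h3.congr_deriv ?_
    have he : 1 - α - 1 = -α := by ring
    rw [he]
    have hne : α - 1 ≠ 0 := by linarith
    field_simp
    ring
  have hint : IntervalIntegrable (fun s => (1 - s) ^ (-α)) volume 0 t := by
    apply ContinuousOn.intervalIntegrable
    intro s hs
    rw [uIcc_of_le ht0] at hs
    have hs1 : (0:ℝ) < 1 - s := by linarith [hs.2]
    exact (ContinuousWithinAt.rpow_const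
      ((continuous_const.sub continuous_id).continuousWithinAt) (Or.inl hs1.ne'))
  rw [intervalIntegral.integral_eq_sub_of_hasDerivAt key hint]
  rw [sub_zero, Real.one_rpow]
  ring

lemma tendsto_aux (α β : ℝ) (hα : 1 < α) (hab : α * β < α - 1) :
    Tendsto (fun u : ℝ => u ^ α * Real.exp (u ^ (α * β) - u ^ (α - 1) / (α - 1)))
      atTop (nhds 0) := by
  have hc : (0:ℝ) < α - 1 := by linarith
  have hA : Tendsto (fun u : ℝ => Real.log u * α + (u ^ (α * β) - u ^ (α - 1) / (α - 1)))
      atTop atBot := by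
    have hfac : (fun u : ℝ => u ^ (α - 1) *
        ((Real.log u / u ^ (α - 1)) * α + (u ^ (α * β - (α - 1)) - 1 / (α - 1))))
        =ᶠ[atTop] fun u : ℝ => Real.log u * α + (u ^ (α * β) - u ^ (α - 1) / (α - 1)) := by
      filter_upwards [eventually_gt_atTop (0:ℝ)] with u hu
      have h1 : u ^ (α - 1) ≠ 0 := (Real.rpow_pos_of_pos hu _).ne'
      have e1 : u ^ (α - 1) * (Real.log u / u ^ (α - 1) * α) = Real.log u * α := by
        field_simp
      have e2 : u ^ (α - 1) * u ^ (α * β - (α - 1)) = u ^ (α * β) := by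
        rw [← Real.rpow_add hu]; ring_nf
      have e3 : u ^ (α - 1) * (1 / (α - 1)) = u ^ (α - 1) / (α - 1) := by ring
      rw [mul_add, mul_sub, e1, e2, e3]
    refine Tendsto.congr' hfac ?_
    have hB : Tendsto (fun u : ℝ =>
        (Real.log u / u ^ (α - 1)) * α + (u ^ (α * β - (α - 1)) - 1 / (α - 1)))
        atTop (nhds (0 * α + (0 - 1 / (α - 1)))) := by
      refine Tendsto.add (Tendsto.mul_const α ?_) (Tendsto.sub_const ?_ _)
      · exact (isLittleO_log_rpow_atTop hc).tendsto_div_nhds_zero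
      · have he : α * β - (α - 1) = -((α - 1) - α * β) := by ring
        rw [he]
        exact tendsto_rpow_neg_atTop (by linarith)
    have hneg : 0 * α + (0 - 1 / (α - 1)) < 0 := by
      have : 0 < 1 / (α - 1) := by positivity
      linarith
    exact (tendsto_rpow_atTop hc).atTop_mul_neg hneg hB
  have hexp : Tendsto (fun u : ℝ =>
      Real.exp (Real.log u * α + (u ^ (α * β) - u ^ (α - 1) / (α - 1)))) atTop (nhds 0) :=
    Real.tendsto_exp_atBot.comp hA
  refine Tendsto.congr' ?_ hexp
  filter_upwards [eventually_gt_atTop (0:ℝ)] with u hu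
  rw [Real.exp_add, ← Real.rpow_def_of_pos hu]

lemma psi_tendsto (α β : ℝ) (hα : 1 < α) (hab : α * β < α - 1) :
    Tendsto (fun t : ℝ => (1 - t) ^ (-α) *
      Real.exp ((1 - t) ^ (-(α * β)) - (1 - t) ^ (1 - α) / (α - 1)))
      (nhdsWithin 1 (Iio 1)) (nhds 0) := by
  have h1 : Tendsto (fun t : ℝ => 1 - t) (nhdsWithin 1 (Iio 1)) (nhdsWithin 0 (Ioi 0)) := by
    apply tendsto_nhdsWithin_of_tendsto_nhds_of_eventually_within
    · have h : Tendsto (fun t : ℝ => 1 - t) (nhds 1) (nhds (1 - 1)) :=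
        ((continuous_const.sub continuous_id).tendsto (1:ℝ))
      simp only [sub_self] at h
      exact h.mono_left nhdsWithin_le_nhds
    · filter_upwards [eventually_mem_nhdsWithin] with t ht
      simp only [mem_Iio] at ht
      simp only [mem_Ioi]
      linarith
  have h2 : Tendsto (fun t : ℝ => (1 - t)⁻¹) (nhdsWithin 1 (Iio 1)) atTop :=
    tendsto_inv_nhdsGT_zero.comp h1
  have h3 := (tendsto_aux α β hα hab).comp h2
  refine Tendsto.congr' ?_ h3
  filter_upwards [eventually_mem_nhdsWithin] with t ht
  simp only [mem_Iio] at ht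
  have h0 : (0:ℝ) < 1 - t := by linarith
  have key : ∀ p : ℝ, ((1 - t)⁻¹) ^ p = (1 - t) ^ (-p) := fun p => by
    rw [Real.inv_rpow h0.le, ← Real.rpow_neg h0.le]
  show ((1 - t)⁻¹) ^ α * Real.exp (((1 - t)⁻¹) ^ (α * β) - ((1 - t)⁻¹) ^ (α - 1) / (α - 1)) = _
  rw [key, key, key]
  have he : -(α - 1) = 1 - α := by ring
  rw [he]

lemma psi_bdd (α β : ℝ) (hα : 1 < α) (hab : α * β < α - 1) :
    ∃ C : ℝ, ∀ t ∈ Ioo (0:ℝ) 1,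
      (1 - t) ^ (-α) * Real.exp ((1 - t) ^ (-(α * β)) - (1 - t) ^ (1 - α) / (α - 1)) ≤ C := by
  set ψ := fun t : ℝ => (1 - t) ^ (-α) *
      Real.exp ((1 - t) ^ (-(α * β)) - (1 - t) ^ (1 - α) / (α - 1)) with hψ
  have hev : ∀ᶠ t in nhdsWithin 1 (Iio 1), ψ t < 1 :=
    (psi_tendsto α β hα hab).eventually_lt_const one_pos
  obtain ⟨a, ha, hsub⟩ := mem_nhdsLT_iff_exists_Ioo_subset.mp hev
  simp only [mem_Iio] at ha
  set b := max a 0 with hb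
  have hb1 : b < 1 := max_lt ha one_pos
  have hne : ∀ t ∈ Icc (0:ℝ) b, (1:ℝ) - t ≠ 0 := by
    intro t ht
    have := ht.2
    have : t < 1 := lt_of_le_of_lt ht.2 hb1
    linarith
  have hbase : ContinuousOn (fun t : ℝ => 1 - t) (Icc 0 b) :=
    (continuous_const.sub continuous_id).continuousOn
  have hcont : ContinuousOn ψ (Icc 0 b) := by
    refine ContinuousOn.mul (hbase.rpow_const fun t ht => Or.inl (hne t ht)) ?_
    refine Real.continuous_exp.comp_continuousOn ?_
    exact (hbase.rpow_const fun t ht => Or.inl (hne t ht)).sub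
      ((hbase.rpow_const fun t ht => Or.inl (hne t ht)).div_const _)
  obtain ⟨C, hC⟩ := isCompact_Icc.exists_bound_of_continuousOn hcont
  refine ⟨max C 1, fun t ht => ?_⟩
  rcases le_or_gt t b with h | h
  · calc ψ t ≤ |ψ t| := le_abs_self _
      _ ≤ C := by simpa [Real.norm_eq_abs] using hC t ⟨ht.1.le, h⟩
      _ ≤ max C 1 := le_max_left _ _
  · have htm : t ∈ Ioo a 1 := ⟨lt_of_le_of_lt (le_max_left a 0) h, ht.2⟩
    exact le_trans (hsub htm).le (le_max_right C 1)
/-- For `f(t) = (1-t)^{-α}` on `[0,1)` with `α > 1`: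
`exp(-∫_0^t f) = exp(-((1-t)^{1-α} - 1)/(α-1))`, and if moreover `α > 1/(1-β)` with
`0 < β < 1` then `∫_0^1 exp(-∫_0^t f) (∫_0^{f(t)} exp(x^β) dx) dt < ∞`. -/
theorem stmt11 (α β : ℝ) (hα : 1 < α) (hβ : β ∈ Ioo (0:ℝ) 1)
    (f : ℝ → ℝ) (hf : ∀ t, f t = (1 - t) ^ (-α)) :
    (∀ t ∈ Ico (0:ℝ) 1,
        Real.exp (-(∫ s in (0:ℝ)..t, f s))
          = Real.exp (-(((1 - t) ^ (1 - α) - 1) / (α - 1)))) ∧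
    ((1 : ℝ) / (1 - β) < α →
      IntegrableOn
        (fun t => Real.exp (-(∫ s in (0:ℝ)..t, f s)) *
          ∫ x in (0:ℝ)..(f t), Real.exp (x ^ β))
        (Ioo (0:ℝ) 1) volume) := by
  obtain ⟨hβ0, hβ1⟩ := hβ
  have hc : (0:ℝ) < α - 1 := by linarith
  constructor
  · intro t ht
    congr 2
    simp only [hf]
    exact integral_aux α hα ht.1 ht.2
  intro hαβ'
  have hab : α * β < α - 1 := by
    rw [div_lt_iff₀ (by linarith : (0:ℝ) < 1 - β)] at hαβ'
    nlinarith
  obtain ⟨C, hC⟩ := psi_bdd α β hα hab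
  set g0 : ℝ → ℝ := fun t => Real.exp (-(((1 - t) ^ (1 - α) - 1) / (α - 1))) *
    ∫ x in (0:ℝ)..((1 - t) ^ (-α)), Real.exp (x ^ β) with hg0
  have hrpowβ : Continuous fun x : ℝ => Real.exp (x ^ β) := by
    refine Real.continuous_exp.comp ?_
    rw [continuous_iff_continuousAt]
    exact fun x => Real.continuousAt_rpow_const x β (Or.inr hβ0.le)
  have hG : Continuous fun r : ℝ => ∫ x in (0:ℝ)..r, Real.exp (x ^ β) :=
    intervalIntegral.continuous_primitive (fun a b => hrpowβ.intervalIntegrable a b) 0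
  have hne : ∀ t ∈ Ioo (0:ℝ) 1, (1:ℝ) - t ≠ 0 := by
    intro t ht
    have := ht.2
    intro h
    linarith
  have hbase : ContinuousOn (fun t : ℝ => 1 - t) (Ioo (0:ℝ) 1) :=
    (continuous_const.sub continuous_id).continuousOn
  have hcont : ContinuousOn g0 (Ioo (0:ℝ) 1) := by
    refine ContinuousOn.mul ?_ ?_
    · exact Real.continuous_exp.comp_continuousOn
        ((((hbase.rpow_const fun t ht => Or.inl (hne t ht)).sub
          continuousOn_const).div_const _).neg)
    · exact hG.comp_continuousOn (hbase.rpow_const fun t ht => Or.inl (hne t ht))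
  have hbound : ∀ t ∈ Ioo (0:ℝ) 1, ‖g0 t‖ ≤ Real.exp (1 / (α - 1)) * C := by
    intro t ht
    have h1t : (0:ℝ) < 1 - t := by linarith [ht.2]
    set r := (1 - t) ^ (-α) with hr
    have hr0 : (0:ℝ) ≤ r := Real.rpow_nonneg h1t.le _
    have hInner : ‖∫ x in (0:ℝ)..r, Real.exp (x ^ β)‖ ≤ Real.exp (r ^ β) * |r - 0| := by
      apply intervalIntegral.norm_integral_le_of_norm_le_const
      intro x hx
      rw [uIoc_of_le hr0] at hx
      have hx1 : x ^ β ≤ r ^ β := Real.rpow_le_rpow hx.1.le hx.2 hβ0.le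
      rw [Real.norm_eq_abs, abs_of_pos (Real.exp_pos _)]
      exact Real.exp_le_exp.mpr hx1
    have hrβ : r ^ β = (1 - t) ^ (-(α * β)) := by
      rw [hr, ← Real.rpow_mul h1t.le]
      congr 1
      ring
    have hfold : Real.exp (-(((1 - t) ^ (1 - α) - 1) / (α - 1))) *
        Real.exp ((1 - t) ^ (-(α * β)))
        = Real.exp (1 / (α - 1)) *
          Real.exp ((1 - t) ^ (-(α * β)) - (1 - t) ^ (1 - α) / (α - 1)) := by
      rw [← Real.exp_add, ← Real.exp_add]
      congr 1
      field_simp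
      ring
    calc ‖g0 t‖ = Real.exp (-(((1 - t) ^ (1 - α) - 1) / (α - 1))) *
          ‖∫ x in (0:ℝ)..r, Real.exp (x ^ β)‖ := by
            rw [hg0]
            rw [norm_mul, Real.norm_eq_abs, abs_of_pos (Real.exp_pos _)]
      _ ≤ Real.exp (-(((1 - t) ^ (1 - α) - 1) / (α - 1))) *
          (Real.exp (r ^ β) * |r - 0|) :=
            mul_le_mul_of_nonneg_left hInner (Real.exp_pos _).le
      _ = (Real.exp (-(((1 - t) ^ (1 - α) - 1) / (α - 1))) *
          Real.exp ((1 - t) ^ (-(α * β)))) * r := by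
            rw [sub_zero, abs_of_nonneg hr0, hrβ]; ring
      _ = (Real.exp (1 / (α - 1)) *
          Real.exp ((1 - t) ^ (-(α * β)) - (1 - t) ^ (1 - α) / (α - 1))) * r := by
            rw [hfold]
      _ = Real.exp (1 / (α - 1)) * ((1 - t) ^ (-α) *
          Real.exp ((1 - t) ^ (-(α * β)) - (1 - t) ^ (1 - α) / (α - 1))) := by
            rw [hr]; ring
      _ ≤ Real.exp (1 / (α - 1)) * C :=
            mul_le_mul_of_nonneg_left (hC t ht) (Real.exp_pos _).le
  have hInt : IntegrableOn g0 (Ioo (0:ℝ) 1) volume := by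
    constructor
    · exact hcont.aestronglyMeasurable measurableSet_Ioo
    · apply HasFiniteIntegral.restrict_of_bounded (C := Real.exp (1 / (α - 1)) * C)
        measure_Ioo_lt_top
      rw [ae_restrict_iff' measurableSet_Ioo]
      exact ae_of_all _ hbound
  refine hInt.congr_fun ?_ measurableSet_Ioo
  intro t ht
  simp only [hg0, hf]
  rw [integral_aux α hα ht.1.le ht.2]
end
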